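/- Let k be an algebraically closed field of characteristic 0 and let i, a, b ∈ k with i² = −1, a² = α, b² = 2, where α(1−α²) ≠ 0. Define the affine curve C = {(x,z) ∈ k² : x² + 2x²z² + αz² = 0}. Then the maps χ(x,z) = −x(bz+i)/(az) (defined when z ≠ 0) and δ(t) = (a(1−t²)/(2bt), (1−t²)/(ib(1+t²))) (defined when t(t²+1) ≠ 0) satisfy: δ(t) ∈ C for all t with t(t²+1) ≠ 0, and χ(δ(t)) = t for all t with t(t²+1)(1−t²) ≠ 0 and δ(t) in the domain of χ. -/

import Mathlib

theorem stmt_6 (k : Type*) [Field k] [IsAlgClosed k] [CharZero k]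
    (α i a b : k) (hα : α * (1 - α ^ 2) ≠ 0)
    (hi : i ^ 2 = -1) (ha : a ^ 2 = α) (hb : b ^ 2 = 2)
    (t : k) (ht : t * (t ^ 2 + 1) ≠ 0) :
    (a * (1 - t ^ 2) / (2 * b * t)) ^ 2
      + 2 * (a * (1 - t ^ 2) / (2 * b * t)) ^ 2 * ((1 - t ^ 2) / (i * b * (1 + t ^ 2))) ^ 2
      + α * ((1 - t ^ 2) / (i * b * (1 + t ^ 2))) ^ 2 = 0 ∧
    (t * (t ^ 2 + 1) * (1 - t ^ 2) ≠ 0 →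
      (1 - t ^ 2) / (i * b * (1 + t ^ 2)) ≠ 0 →
      -(a * (1 - t ^ 2) / (2 * b * t)) * (b * ((1 - t ^ 2) / (i * b * (1 + t ^ 2))) + i)
        / (a * ((1 - t ^ 2) / (i * b * (1 + t ^ 2)))) = t) := by
  have ht0 : t ≠ 0 := fun h => ht (by simp [h])
  have ht1 : t ^ 2 + 1 ≠ 0 := fun h => ht (by simp [h])
  have hb0 : b ≠ 0 := fun h => by simp [h] at hb
  have hi0 : i ≠ 0 := fun h => by simp [h] at hi
  have hα0 : α ≠ 0 := fun h => hα (by simp [h])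
  have ha0 : a ≠ 0 := fun h => hα0 (by rw [← ha, h]; ring)
  have hd1 : (2:k) * b * t ≠ 0 := by simp [hb0, ht0]
  have hd2 : i * b * (1 + t ^ 2) ≠ 0 := by
    have h1 : (1:k) + t ^ 2 ≠ 0 := by rw [add_comm]; exact ht1
    exact mul_ne_zero (mul_ne_zero hi0 hb0) h1
  constructor
  · have h1 : (1:k) + t ^ 2 ≠ 0 := by rw [add_comm]; exact ht1
    field_simp
    linear_combination
      ((1-t^2)^2*a^2*b^2*(1+t^2)^2) * hi
      + ((1-t^2)^2*(-a^2*(1+t^2)^2 + 4*t^2*α)) * hb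
      + ((1-t^2)^2*(-8*t^2)) * ha
  · intro h2 hz
    have hnum : (1 - t ^ 2) ≠ 0 := fun h => h2 (by simp [h])
    have h1 : (1:k) + t ^ 2 ≠ 0 := by rw [add_comm]; exact ht1
    field_simp
    linear_combination (-(1+t^2)) * hi
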